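/- If the collection of domains dom f_ξ = {x ∈ 𝒳 : f(ξ,x) < +∞}, ξ ∈ Ξ, forms a chain-constrained domain of order m, then the class 𝓗 = {H_x}_{x∈𝒳} ∪ {Ξ}, where H_x = {ξ ∈ Ξ : f(ξ,x) < +∞}, satisfies d_VC(𝓗) ≤ (e/((e−1)·log 2)) · m · log( (e/log 2) · m ). -/

import Mathlib

open MeasureTheory Real Set

/-- A family `H` of subsets of `α` shatters a finite set `S` if every subset `D ⊆ S`
can be picked out by some `C ∈ H`. -/
def ShattersFam {α : Type*} (H : Set (Set α)) (S : Finset α) : Prop :=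
  ∀ D : Finset α, D ⊆ S → ∃ C ∈ H, (D : Set α) ⊆ C ∧ ((S : Set α) \ (D : Set α)) ∩ C = ∅

/-- The VC dimension of a family of subsets: the supremum (in `ℕ∞`) of cardinalities
of finite sets it shatters. -/
noncomputable def vcDim {α : Type*} (H : Set (Set α)) : ℕ∞ :=
  ⨆ S ∈ {S : Finset α | ShattersFam H S}, (S.card : ℕ∞)

/-- VC dimension under a chain-constrained domain.
If the domains `dom f_ξ = {x : f(ξ,x) < +∞}` form a chain-constrained domain of order `m`,
then `𝓗 = {H_x}_{x∈𝒳} ∪ {Ξ}` with `H_x = {ξ : f(ξ,x) < +∞}` satisfies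
`d_VC(𝓗) ≤ (e/((e−1) log 2)) m log((e/log 2) m)` (stated via shattered sets). -/
theorem statement_6 {Ξ 𝒳 : Type*} (f : Ξ → 𝒳 → EReal) (m : ℕ) (hm : 1 ≤ m)
    (U : Fin m → Ξ → Set 𝒳)
    (hchain : ∀ k : Fin m, ∀ ξ₁ ξ₂ : Ξ, U k ξ₁ ⊆ U k ξ₂ ∨ U k ξ₂ ⊆ U k ξ₁)
    (hdom : ∀ ξ : Ξ, {x | f ξ x < ⊤} = ⋂ k : Fin m, U k ξ) :
    ∀ S : Finset Ξ,
      ShattersFam ((Set.range fun x : 𝒳 => {ξ | f ξ x < ⊤}) ∪ {Set.univ}) S →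
      (S.card : ℝ) ≤ Real.exp 1 / ((Real.exp 1 - 1) * Real.log 2) * m *
        Real.log (Real.exp 1 / Real.log 2 * m) := by
  classical
  intro S hS
  set n := S.card with hn
  -- the "extended" parametrization of the family: `none ↦ univ`, `some x ↦ H_x`
  set g : Option 𝒳 → Set Ξ := fun o => o.elim Set.univ (fun x => {ξ | f ξ x < ⊤}) with hg
  -- restriction of the k-th chain constraint to S
  set A : Option 𝒳 → Fin m → Finset Ξ := fun o k =>
    S.filter (fun ξ => o.elim True (fun x => x ∈ U k ξ)) with hA
  have hAsub : ∀ o k, A o k ⊆ S := fun o k => Finset.filter_subset _ _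
  -- the traces of each chain constraint are pairwise comparable
  have hcomp : ∀ o o' : Option 𝒳, ∀ k, A o k ⊆ A o' k ∨ A o' k ⊆ A o k := by
    intro o o' k
    cases o with
    | none =>
      right; intro ξ hξ
      simp only [hA, Finset.mem_filter, Option.elim] at *
      exact (@Finset.mem_filter _ _ (fun _ => Classical.propDecidable _) _ _).mpr ⟨hAsub _ _ hξ, trivial⟩
    | some x =>
      cases o' with
      | none =>
        left; intro ξ hξ
        simp only [hA, Finset.mem_filter, Option.elim] at *
        exact (@Finset.mem_filter _ _ (fun _ => Classical.propDecidable _) _ _).mpr ⟨hAsub (some x) k hξ, trivial⟩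
      | some x' =>
        by_contra hcon
        push_neg at hcon
        obtain ⟨h1, h2⟩ := hcon
        obtain ⟨ξ, hξA, hξA'⟩ := Finset.not_subset.mp h1
        obtain ⟨ξ', hξ'A', hξ'A⟩ := Finset.not_subset.mp h2
        simp only [hA, Finset.mem_filter, Option.elim] at hξA hξA' hξ'A' hξ'A
        rcases hchain k ξ ξ' with h | h
        · exact hξ'A (Finset.mem_filter.mpr ⟨(Finset.mem_filter.mp hξ'A').1, h (Finset.mem_filter.mp hξA).2⟩)
        · exact hξA' (Finset.mem_filter.mpr ⟨(Finset.mem_filter.mp hξA).1, h (Finset.mem_filter.mp hξ'A').2⟩)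
  -- membership in `g o` on `S` is determined by the traces
  have htrace : ∀ o : Option 𝒳, ∀ ξ ∈ S, ξ ∈ g o ↔ ∀ k, ξ ∈ A o k := by
    intro o ξ hξ
    cases o with
    | none =>
      simp only [hg, hA, Option.elim, Set.mem_univ, true_iff, Finset.mem_filter]
      exact fun k => (@Finset.mem_filter _ _ (fun _ => Classical.propDecidable _) _ _).mpr ⟨hξ, trivial⟩
    | some x =>
      have hmem : (f ξ x < ⊤) ↔ x ∈ ⋂ k, U k ξ := by
        constructor
        · intro h; rw [← hdom ξ]; exact h
        · intro h; have : x ∈ {x | f ξ x < ⊤} := by rw [hdom ξ]; exact h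
          exact this
      simp only [hg, hA, Option.elim, Set.mem_setOf_eq, Finset.mem_filter]
      rw [hmem, Set.mem_iInter]
      constructor
      · exact fun h k => Finset.mem_filter.mpr ⟨hξ, h k⟩
      · exact fun h k => (Finset.mem_filter.mp (h k)).2
  -- every subset of S is picked out as a filter by some `g o`
  have hex : ∀ D ∈ S.powerset, ∃ o : Option 𝒳, D = S.filter (fun ξ => ξ ∈ g o) := by
    intro D hD
    obtain ⟨C, hC, hsub, hint⟩ := hS D (Finset.mem_powerset.mp hD)
    have hgo : ∃ o, g o = C := by
      rcases hC with ⟨x, rfl⟩ | hC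
      · exact ⟨some x, rfl⟩
      · refine ⟨none, ?_⟩
        simp only [Set.mem_singleton_iff] at hC
        simp [hg, hC]
    obtain ⟨o, rfl⟩ := hgo
    refine ⟨o, ?_⟩
    ext ξ
    simp only [Finset.mem_filter]
    constructor
    · intro hξD
      exact ⟨Finset.mem_powerset.mp hD hξD, hsub hξD⟩
    · rintro ⟨hξS, hξC⟩
      by_contra hξD
      have hmem : ξ ∈ ((S : Set Ξ) \ (D : Set Ξ)) ∩ (g o) := ⟨⟨hξS, hξD⟩, hξC⟩
      rw [hint] at hmem
      exact hmem
  choose o ho using hex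
  -- the counting map
  set Φ : Finset Ξ → (Fin m → Fin (n + 1)) := fun D =>
    if hD : D ∈ S.powerset then
      fun k => ⟨(A (o D hD) k).card,
        Nat.lt_succ_of_le (Finset.card_le_card (hAsub _ _))⟩
    else fun _ => 0 with hΦ
  have hinj : Set.InjOn Φ (S.powerset : Set (Finset Ξ)) := by
    intro D hD D' hD' hΦeq
    simp only [Finset.mem_coe] at hD hD'
    have hAeq : ∀ k, A (o D hD) k = A (o D' hD') k := by
      intro k
      have hcard : (A (o D hD) k).card = (A (o D' hD') k).card := by
        have h := congrFun hΦeq k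
        simp only [hΦ, dif_pos hD, dif_pos hD'] at h
        exact congrArg Fin.val h
      rcases hcomp (o D hD) (o D' hD') k with h | h
      · exact Finset.eq_of_subset_of_card_le h (le_of_eq hcard.symm)
      · exact (Finset.eq_of_subset_of_card_le h (le_of_eq hcard)).symm
    rw [ho D hD, ho D' hD']
    apply Finset.filter_congr
    intro ξ hξ
    rw [htrace _ ξ hξ, htrace _ ξ hξ]
    constructor
    · intro h k; rw [← hAeq k]; exact h k
    · intro h k; rw [hAeq k]; exact h k
  -- counting: 2^n ≤ (n+1)^m
  have hcount : 2 ^ n ≤ (n + 1) ^ m := by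
    have h1 : S.powerset.card ≤ (Finset.univ : Finset (Fin m → Fin (n + 1))).card :=
      Finset.card_le_card_of_injOn Φ (fun D _ => Finset.mem_univ _) hinj
    rw [Finset.card_powerset, Finset.card_univ] at h1
    simpa using h1
  -- analytic part
  have hR : (2 : ℝ) ^ n ≤ ((n : ℝ) + 1) ^ m := by exact_mod_cast hcount
  have hE1 : (1 : ℝ) < Real.exp 1 := by
    have := Real.exp_one_gt_d9; linarith
  have hL : (0 : ℝ) < Real.log 2 := Real.log_pos (by norm_num)
  have hL1 : Real.log 2 ≤ 1 := by
    have := Real.log_le_sub_one_of_pos (show (0:ℝ) < 2 by norm_num); linarith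
  have hM1 : (1 : ℝ) ≤ (m : ℝ) := by exact_mod_cast hm
  have hM0 : (0 : ℝ) < (m : ℝ) := by linarith
  have hNlog : (n : ℝ) * Real.log 2 ≤ (m : ℝ) * Real.log ((n : ℝ) + 1) := by
    have h := Real.log_le_log (show (0:ℝ) < 2 ^ n by positivity) hR
    rwa [Real.log_pow, Real.log_pow] at h
  set a : ℝ := Real.exp 1 / Real.log 2 * m with ha
  have hapos : 0 < a := by
    have : (0:ℝ) < Real.exp 1 := Real.exp_pos 1
    positivity
  have hloga : Real.log ((n : ℝ) + 1) ≤ Real.log a + ((n : ℝ) + 1) / a - 1 := by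
    have h := Real.log_le_sub_one_of_pos (show (0:ℝ) < ((n:ℝ)+1)/a by positivity)
    rw [Real.log_div (by positivity) (ne_of_gt hapos)] at h
    linarith
  have hma : (m : ℝ) / a = Real.log 2 / Real.exp 1 := by
    rw [ha]
    field_simp
  -- combine
  have h4 : (m : ℝ) * Real.log ((n:ℝ)+1) ≤
      (m : ℝ) * (Real.log a + ((n:ℝ)+1)/a - 1) :=
    mul_le_mul_of_nonneg_left hloga (le_of_lt hM0)
  have h5 : (m : ℝ) * (((n:ℝ)+1)/a) = ((n:ℝ)+1) * ((m:ℝ)/a) := by ring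
  rw [hma] at h5
  have h6 : (n : ℝ) * Real.log 2 ≤
      (m : ℝ) * Real.log a + ((n:ℝ)+1) * (Real.log 2 / Real.exp 1) - m := by
    have : (m : ℝ) * (Real.log a + ((n:ℝ)+1)/a - 1)
        = (m : ℝ) * Real.log a + (m : ℝ) * (((n:ℝ)+1)/a) - m := by ring
    rw [this, h5] at h4
    linarith
  -- multiply through by E = exp 1
  have hEpos : (0 : ℝ) < Real.exp 1 := Real.exp_pos 1
  have h7 : Real.exp 1 * ((n:ℝ) * Real.log 2) ≤
      Real.exp 1 * ((m : ℝ) * Real.log a + ((n:ℝ)+1) * (Real.log 2 / Real.exp 1) - m) :=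
    mul_le_mul_of_nonneg_left h6 (le_of_lt hEpos)
  have h8 : Real.exp 1 * ((m : ℝ) * Real.log a + ((n:ℝ)+1) * (Real.log 2 / Real.exp 1) - m)
      = Real.exp 1 * ((m:ℝ) * Real.log a) + ((n:ℝ)+1) * Real.log 2 - Real.exp 1 * m := by
    field_simp
  rw [h8] at h7
  have hEM : Real.exp 1 ≤ Real.exp 1 * (m : ℝ) :=
    le_mul_of_one_le_right (le_of_lt hEpos) hM1
  have hc : (0 : ℝ) < (Real.exp 1 - 1) * Real.log 2 := by
    apply mul_pos <;> linarith
  have hgoal' : (n : ℝ) * ((Real.exp 1 - 1) * Real.log 2) ≤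
      Real.exp 1 * ((m : ℝ) * Real.log a) := by nlinarith [h7, hL1, hEM]
  calc (n : ℝ) ≤ Real.exp 1 * ((m : ℝ) * Real.log a) / ((Real.exp 1 - 1) * Real.log 2) :=
        (le_div_iff₀ hc).mpr hgoal'
    _ = Real.exp 1 / ((Real.exp 1 - 1) * Real.log 2) * m * Real.log a := by ring
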